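/- Let L : ℝ^m → ℝ be differentiable with M-Lipschitz gradient and Θ ⊆ ℝ^m closed convex. Fix θ ∈ Θ, τ > 0, and g, G ∈ ℝ^m with g = ∇L(θ). Define θ⁺ := Π(θ − τG), θ̄ := Π(θ − τg), e := θ⁺ − θ, ē := θ̄ − θ. Then L(θ⁺) − L(θ) ≤ τ|g − G|² − (1/(2τ) − M)|ē|² − (1/(2τ) − M/2)|e|² − |e − ē|²/(2τ). -/

import Mathlib

open RealInnerProductSpace

/-- Descent lemma for functions with Lipschitz gradient. -/
lemma descent_aux {E : Type*} [NormedAddCommGroup E] [InnerProductSpace ℝ E] [CompleteSpace E]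
    (L : E → ℝ) (hL : Differentiable ℝ L) (M : ℝ) (hM : 0 ≤ M)
    (hLip : ∀ x y, ‖gradient L x - gradient L y‖ ≤ M * ‖x - y‖) (x y : E) :
    L y ≤ L x + ⟪gradient L x, y - x⟫ + M / 2 * ‖y - x‖ ^ 2 := by
  set v := y - x with hv
  have hgradcont : Continuous (gradient L) := by
    have : LipschitzWith (Real.toNNReal M) (gradient L) := by
      apply LipschitzWith.of_dist_le_mul
      intro a b
      rw [dist_eq_norm, dist_eq_norm, Real.coe_toNNReal M hM]
      exact hLip a b
    exact this.continuous
  have hderiv : ∀ t : ℝ, HasDerivAt (fun t : ℝ => L (x + t • v))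
      ⟪gradient L (x + t • v), v⟫ t := by
    intro t
    have h2 : HasDerivAt (fun t : ℝ => x + t • v) v t := by
      simpa using ((hasDerivAt_id t).smul_const v).const_add x
    have h1 := (hL (x + t • v)).hasGradientAt.hasFDerivAt
    have := h1.comp_hasDerivAt t h2
    simpa [InnerProductSpace.toDual_apply_apply, Function.comp_def] using this
  have hcont : Continuous (fun t : ℝ => ⟪gradient L (x + t • v), v⟫) := by
    apply Continuous.inner
    · exact hgradcont.comp (by continuity)
    · exact continuous_const
  have hFTC : L y - L x = ∫ t in (0:ℝ)..1, ⟪gradient L (x + t • v), v⟫ := by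
    have := intervalIntegral.integral_eq_sub_of_hasDerivAt
      (f := fun t : ℝ => L (x + t • v)) (fun t _ => hderiv t)
      (hcont.intervalIntegrable 0 1)
    rw [this]
    norm_num [hv]
  have hbound : ∀ t ∈ Set.Icc (0:ℝ) 1,
      ⟪gradient L (x + t • v), v⟫ ≤ ⟪gradient L x, v⟫ + M * t * ‖v‖ ^ 2 := by
    intro t ht
    have h1 : ⟪gradient L (x + t • v), v⟫ - ⟪gradient L x, v⟫
        = ⟪gradient L (x + t • v) - gradient L x, v⟫ := by
      rw [inner_sub_left]
    have h2 : ⟪gradient L (x + t • v) - gradient L x, v⟫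
        ≤ ‖gradient L (x + t • v) - gradient L x‖ * ‖v‖ :=
      real_inner_le_norm _ _
    have h3 : ‖gradient L (x + t • v) - gradient L x‖ ≤ M * ‖t • v‖ := by
      simpa using hLip (x + t • v) x
    have h4 : ‖t • v‖ = t * ‖v‖ := by
      rw [norm_smul, Real.norm_eq_abs, abs_of_nonneg ht.1]
    rw [h4] at h3
    nlinarith [norm_nonneg v, mul_le_mul_of_nonneg_right h3 (norm_nonneg v)]
  have hmono : (∫ t in (0:ℝ)..1, ⟪gradient L (x + t • v), v⟫)
      ≤ ∫ t in (0:ℝ)..1, (⟪gradient L x, v⟫ + M * t * ‖v‖ ^ 2) := by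
    apply intervalIntegral.integral_mono_on (by norm_num)
      (hcont.intervalIntegrable 0 1)
      ((by continuity : Continuous fun t : ℝ =>
        ⟪gradient L x, v⟫ + M * t * ‖v‖ ^ 2).intervalIntegrable 0 1)
    exact hbound
  have hval : (∫ t in (0:ℝ)..1, (⟪gradient L x, v⟫ + M * t * ‖v‖ ^ 2))
      = ⟪gradient L x, v⟫ + M / 2 * ‖v‖ ^ 2 := by
    have hfe : (fun t : ℝ => ⟪gradient L x, v⟫ + M * t * ‖v‖ ^ 2)
        = fun t : ℝ => ⟪gradient L x, v⟫ + (M * ‖v‖ ^ 2) * t := by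
      funext t; ring
    rw [hfe, intervalIntegral.integral_add (intervalIntegrable_const)
      ((show Continuous fun t : ℝ => (M * ‖v‖ ^ 2) * t from continuous_const.mul continuous_id').intervalIntegrable 0 1),
      intervalIntegral.integral_const_mul, integral_id,
      intervalIntegral.integral_const]
    norm_num
    ring
  linarith [hFTC ▸ (hmono.trans_eq hval)]

set_option maxHeartbeats 1000000 in
theorem stmt6 {m : ℕ} (Θ : Set (EuclideanSpace ℝ (Fin m)))
    (hne : Θ.Nonempty) (hclosed : IsClosed Θ) (hconv : Convex ℝ Θ)
    (P : EuclideanSpace ℝ (Fin m) → EuclideanSpace ℝ (Fin m))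
    (hPmem : ∀ x, P x ∈ Θ)
    (hPproj : ∀ x, ∀ y ∈ Θ, ‖x - P x‖ ≤ ‖x - y‖)
    (L : EuclideanSpace ℝ (Fin m) → ℝ) (hL : Differentiable ℝ L)
    (M : ℝ) (hM : 0 < M)
    (hLip : ∀ x y, ‖gradient L x - gradient L y‖ ≤ M * ‖x - y‖)
    (θ g G : EuclideanSpace ℝ (Fin m)) (hθ : θ ∈ Θ) (hg : g = gradient L θ)
    (τ : ℝ) (hτ : 0 < τ) :
    L (P (θ - τ • G)) - L θ ≤
      τ * ‖g - G‖ ^ 2 - (1 / (2 * τ) - M) * ‖P (θ - τ • g) - θ‖ ^ 2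
        - (1 / (2 * τ) - M / 2) * ‖P (θ - τ • G) - θ‖ ^ 2
        - ‖(P (θ - τ • G) - θ) - (P (θ - τ • g) - θ)‖ ^ 2 / (2 * τ) := by
  -- variational inequality for the projection
  have hVI : ∀ x, ∀ y ∈ Θ, ⟪x - P x, y - P x⟫ ≤ 0 := by
    intro x y hy
    haveI : Nonempty ↑Θ := hne.to_subtype
    have hbdd : BddBelow (Set.range fun w : Θ => ‖x - (w : EuclideanSpace ℝ (Fin m))‖) := by
      refine ⟨0, ?_⟩
      rintro r ⟨w, rfl⟩
      positivity
    have hiInf : ‖x - P x‖ = ⨅ w : Θ, ‖x - (w : EuclideanSpace ℝ (Fin m))‖ := by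
      apply le_antisymm
      · exact le_ciInf fun w => hPproj x w w.2
      · exact ciInf_le hbdd ⟨P x, hPmem x⟩
    exact (norm_eq_iInf_iff_real_inner_le_zero hconv (hPmem x)).1 hiInf y hy
  set θp := P (θ - τ • G) with hθp
  set θb := P (θ - τ • g) with hθb
  set e := θp - θ with he
  set eb := θb - θ with heb
  -- descent lemma
  have hdesc : L θp - L θ ≤ ⟪g, e⟫ + M / 2 * ‖e‖ ^ 2 := by
    have := descent_aux L hL M hM.le hLip θ θp
    rw [← hg] at this
    linarith [this]
  -- VI instances
  have hA : τ * ⟪g, eb⟫ + ‖eb‖ ^ 2 ≤ 0 := by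
    have := hVI (θ - τ • g) θ hθ
    have h1 : θ - τ • g - θb = -(τ • g) - eb := by simp only [heb]; try abel
    have h2 : θ - θb = -eb := by simp only [heb]; try abel
    rw [h1, h2] at this
    have heq : ⟪-(τ • g) - eb, -eb⟫ = τ * ⟪g, eb⟫ + ‖eb‖ ^ 2 := by
      simp only [inner_sub_left, inner_neg_left, inner_neg_right, inner_neg_neg,
        real_inner_smul_left, real_inner_self_eq_norm_sq]
      ring
    rw [heq] at this
    linarith
  have hB : τ * ⟪G, e - eb⟫ + ⟪e, e - eb⟫ ≤ 0 := by
    have := hVI (θ - τ • G) θb (hPmem _)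
    have h1 : θ - τ • G - θp = -(τ • G) - e := by simp only [he]; try abel
    have h2 : θb - θp = -(e - eb) := by simp only [he, heb]; try abel
    rw [h1, h2] at this
    have heq : ⟪-(τ • G) - e, -(e - eb)⟫ = τ * ⟪G, e - eb⟫ + ⟪e, e - eb⟫ := by
      simp only [inner_sub_left, inner_neg_left, inner_neg_right, inner_neg_neg,
        real_inner_smul_left]
      ring
    rw [heq] at this
    linarith
  -- nonexpansiveness
  have hC : ‖e - eb‖ ≤ τ * ‖g - G‖ := by
    have t1 := hVI (θ - τ • G) θb (hPmem _)
    have t2 := hVI (θ - τ • g) θp (hPmem _)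
    have h1 : θ - τ • G - θp = -(τ • G) - e := by simp only [he]; try abel
    have h2 : θb - θp = -(e - eb) := by simp only [he, heb]; try abel
    have h3 : θ - τ • g - θb = -(τ • g) - eb := by simp only [heb]; try abel
    have h4 : θp - θb = e - eb := by simp only [he, heb]; try abel
    rw [h1, h2] at t1
    rw [h3, h4] at t2
    have hsum : ‖e - eb‖ ^ 2 ≤ ⟪τ • (g - G), e - eb⟫ := by
      have e1 : ⟪-(τ • G) - e, -(e - eb)⟫
          = ⟪τ • G, e - eb⟫ + ⟪e, e - eb⟫ := by
        simp only [inner_sub_left, inner_neg_left, inner_neg_right, inner_neg_neg]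
        try ring
      have e2 : ⟪-(τ • g) - eb, e - eb⟫
          = -⟪τ • g, e - eb⟫ - ⟪eb, e - eb⟫ := by
        simp only [inner_sub_left, inner_neg_left, inner_neg_right, inner_neg_neg]
        try ring
      have e3 : ⟪e, e - eb⟫ - ⟪eb, e - eb⟫ = ‖e - eb‖ ^ 2 := by
        rw [← inner_sub_left, real_inner_self_eq_norm_sq]
      have e4 : ⟪τ • (g - G), e - eb⟫ = ⟪τ • g, e - eb⟫ - ⟪τ • G, e - eb⟫ := by
        rw [smul_sub, inner_sub_left]
      rw [e1] at t1; rw [e2] at t2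
      linarith
    have hcs : ⟪τ • (g - G), e - eb⟫ ≤ ‖τ • (g - G)‖ * ‖e - eb‖ :=
      real_inner_le_norm _ _
    have hns : ‖τ • (g - G)‖ = τ * ‖g - G‖ := by
      rw [norm_smul, Real.norm_eq_abs, abs_of_pos hτ]
    rcases eq_or_lt_of_le (norm_nonneg (e - eb)) with h | h
    · rw [← h]; positivity
    · have : ‖e - eb‖ ^ 2 ≤ τ * ‖g - G‖ * ‖e - eb‖ := by
        rw [hns] at hcs; linarith
      nlinarith
  -- polarization
  have hpol : 2 * ⟪e, e - eb⟫ = ‖e‖ ^ 2 + ‖e - eb‖ ^ 2 - ‖eb‖ ^ 2 := by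
    have h1 : ⟪e, e - eb⟫ = ‖e‖ ^ 2 - ⟪e, eb⟫ := by
      rw [inner_sub_right, real_inner_self_eq_norm_sq]
    have h2 : ‖e - eb‖ ^ 2 = ‖e‖ ^ 2 - 2 * ⟪e, eb⟫ + ‖eb‖ ^ 2 := by
      rw [← real_inner_self_eq_norm_sq, inner_sub_sub_self,
        real_inner_self_eq_norm_sq, real_inner_self_eq_norm_sq, real_inner_comm eb e]
      ring
    linarith
  have hsplit : ⟪g, e⟫ = ⟪g, eb⟫ + ⟪g - G, e - eb⟫ + ⟪G, e - eb⟫ := by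
    rw [inner_sub_left]
    have : ⟪g, e⟫ = ⟪g, eb⟫ + ⟪g, e - eb⟫ := by
      rw [← inner_add_right]; congr 1; abel
    linarith
  have hcs2 : ⟪g - G, e - eb⟫ ≤ ‖g - G‖ * ‖e - eb‖ := real_inner_le_norm _ _
  have hprod : ‖g - G‖ * ‖e - eb‖ ≤ τ * ‖g - G‖ ^ 2 := by
    nlinarith [norm_nonneg (g - G), hC]
  -- put things together
  have h2τ : (0:ℝ) < 2 * τ := by linarith
  rw [← mul_le_mul_iff_right₀ h2τ]
  have hexp : 2 * τ * (τ * ‖g - G‖ ^ 2 - (1 / (2 * τ) - M) * ‖eb‖ ^ 2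
        - (1 / (2 * τ) - M / 2) * ‖e‖ ^ 2 - ‖e - eb‖ ^ 2 / (2 * τ))
      = 2 * τ ^ 2 * ‖g - G‖ ^ 2 - (1 - 2 * τ * M) * ‖eb‖ ^ 2
        - (1 - τ * M) * ‖e‖ ^ 2 - ‖e - eb‖ ^ 2 := by
    field_simp
  rw [hexp]
  nlinarith [mul_le_mul_of_nonneg_left hdesc h2τ.le, hA, hB, hpol,
    mul_le_mul_of_nonneg_left hcs2 h2τ.le,
    mul_le_mul_of_nonneg_left hprod h2τ.le,
    mul_le_mul_of_nonneg_left hsplit.le h2τ.le,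
    mul_le_mul_of_nonneg_left hsplit.ge h2τ.le,
    mul_nonneg (mul_nonneg h2τ.le hM.le) (sq_nonneg ‖eb‖)]
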